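/- Let A ∈ ℂ^{n×n} be Hermitian and τ > 0. Suppose vectors e, e', l ∈ ℂⁿ satisfy i (e' − e)/τ − A ((e' + e)/2) = l. Then ‖e'‖₂ ≤ ‖e‖₂ + τ ‖l‖₂. -/

import Mathlib

open Matrix

noncomputable def euclNorm {n : ℕ} (v : Fin n → ℂ) : ℝ :=
  Real.sqrt (∑ k, ‖v k‖ ^ 2)

lemma euclNorm_eq {n : ℕ} (v : Fin n → ℂ) :
    euclNorm v = ‖(WithLp.equiv 2 (Fin n → ℂ)).symm v‖ := by
  rw [EuclideanSpace.norm_eq]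
  simp [euclNorm]

/-- If `A ∈ ℂ^{n×n}` is Hermitian, `τ > 0`, and vectors `e, e', l ∈ ℂⁿ`
satisfy `i (e' − e)/τ − A ((e' + e)/2) = l`, then `‖e'‖₂ ≤ ‖e‖₂ + τ ‖l‖₂`. -/
theorem cnDMD_one_step_training_estimate (n : ℕ) (A : Matrix (Fin n) (Fin n) ℂ)
    (hA : A.IsHermitian) (τ : ℝ) (hτ : 0 < τ) (e e' l : Fin n → ℂ)
    (h : (Complex.I / (τ : ℂ)) • (e' - e) - A.mulVec ((2 : ℂ)⁻¹ • (e' + e)) = l) :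
    euclNorm e' ≤ euclNorm e + τ * euclNorm l := by
  have hτ0 : (τ : ℂ) ≠ 0 := by exact_mod_cast hτ.ne'
  set m : Fin n → ℂ := (2 : ℂ)⁻¹ • (e' + e) with hm
  have hdiff : e' - e = (-Complex.I * τ) • (A.mulVec m + l) := by
    have h1 : (Complex.I / (τ : ℂ)) • (e' - e) = A.mulVec m + l := by
      rw [← h]; abel
    have := congrArg (fun v => (-Complex.I * (τ:ℂ)) • v) h1
    simp only [smul_smul] at this
    rw [← this]
    rw [show (-Complex.I * (τ:ℂ) * (Complex.I / τ)) = 1 by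
      rw [show (-Complex.I * (τ:ℂ) * (Complex.I / τ)) = -(Complex.I * Complex.I) * ((τ:ℂ) / τ) by ring,
        div_self hτ0, Complex.I_mul_I]; ring]
    simp
  -- move to EuclideanSpace
  set X : EuclideanSpace ℂ (Fin n) := (WithLp.equiv 2 (Fin n → ℂ)).symm e' with hX
  set Y : EuclideanSpace ℂ (Fin n) := (WithLp.equiv 2 (Fin n → ℂ)).symm e with hY
  set Z : EuclideanSpace ℂ (Fin n) := (WithLp.equiv 2 (Fin n → ℂ)).symm l with hZ
  set M : EuclideanSpace ℂ (Fin n) := (WithLp.equiv 2 (Fin n → ℂ)).symm m with hM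
  set T : EuclideanSpace ℂ (Fin n) →ₗ[ℂ] EuclideanSpace ℂ (Fin n) := Matrix.toEuclideanLin A with hT
  have hTM : T M = (WithLp.equiv 2 (Fin n → ℂ)).symm (A.mulVec m) :=
    Matrix.toEuclideanLin_toLp A m
  have hXY : X - Y = (-Complex.I * τ) • (T M + Z) := by
    rw [hTM]
    exact congrArg (WithLp.equiv 2 (Fin n → ℂ)).symm hdiff
  have h2M : X + Y = (2 : ℂ) • M := by
    have h0 : e' + e = (2 : ℂ) • m := by
      rw [hm, smul_smul]; norm_num
    exact congrArg (WithLp.equiv 2 (Fin n → ℂ)).symm h0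
  have hsym : T.IsSymmetric := Matrix.isHermitian_iff_isSymmetric.mp hA
  set c : ℂ := inner ℂ M (T M) with hc
  set d : ℂ := inner ℂ (X + Y) Z with hd
  have himM : c.im = 0 := by
    have h1 : (inner ℂ (T M) M : ℂ) = c := hsym M M
    have h2 : (starRingEnd ℂ) c = inner ℂ (T M) M := inner_conj_symm _ _
    rw [h1] at h2
    exact Complex.conj_eq_iff_im.mp h2
  have reLHS : (inner ℂ (X + Y) (X - Y) : ℂ).re = ‖X‖^2 - ‖Y‖^2 := by
    rw [inner_add_left, inner_sub_right, inner_sub_right]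
    have h1 : RCLike.re (inner ℂ X X : ℂ) = ‖X‖^2 := inner_self_eq_norm_sq X
    have h2 : RCLike.re (inner ℂ Y Y : ℂ) = ‖Y‖^2 := inner_self_eq_norm_sq Y
    have h3 : RCLike.re (inner ℂ X Y : ℂ) = RCLike.re (inner ℂ Y X : ℂ) := inner_re_symm X Y
    simp only [RCLike.re_to_complex] at h1 h2 h3
    simp only [Complex.add_re, Complex.sub_re]
    linarith
  have rhs : (inner ℂ (X + Y) (X - Y) : ℂ)
      = (-Complex.I * τ) * ((2 : ℂ) * c + d) := by
    rw [hXY, inner_smul_right, inner_add_right, ← hd, h2M, inner_smul_left,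
      map_ofNat (starRingEnd ℂ) 2, ← hc]
  have reRHS : (inner ℂ (X + Y) (X - Y) : ℂ).re = τ * d.im := by
    rw [rhs]
    simp only [Complex.mul_re, Complex.mul_im, Complex.add_re, Complex.add_im,
      Complex.neg_re, Complex.neg_im, Complex.I_re, Complex.I_im, Complex.mul_re,
      Complex.ofReal_re, Complex.ofReal_im, himM, Complex.re_ofNat, Complex.im_ofNat]
    ring
  have key : ‖X‖^2 - ‖Y‖^2 = τ * d.im := by rw [← reLHS, reRHS]
  have him_le : d.im ≤ (‖X‖ + ‖Y‖) * ‖Z‖ := by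
    calc d.im ≤ ‖d‖ := Complex.im_le_norm _
      _ = ‖d‖ := rfl
      _ ≤ ‖X + Y‖ * ‖Z‖ := by rw [hd]; exact norm_inner_le_norm _ _
      _ ≤ (‖X‖ + ‖Y‖) * ‖Z‖ :=
          mul_le_mul_of_nonneg_right (norm_add_le _ _) (norm_nonneg _)
  have hfin : ‖X‖^2 - ‖Y‖^2 ≤ τ * ((‖X‖ + ‖Y‖) * ‖Z‖) := by
    rw [key]
    exact mul_le_mul_of_nonneg_left him_le hτ.le
  rw [euclNorm_eq, euclNorm_eq, euclNorm_eq]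
  have hXn : (0:ℝ) ≤ ‖X‖ := norm_nonneg _
  have hYn : (0:ℝ) ≤ ‖Y‖ := norm_nonneg _
  have hZn : (0:ℝ) ≤ ‖Z‖ := norm_nonneg _
  nlinarith [mul_nonneg hτ.le hZn, mul_nonneg (mul_nonneg hτ.le hZn) hXn,
    mul_nonneg (mul_nonneg hτ.le hZn) hYn]
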